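/- Let K be a field, N ≥ 1, B an N×N matrix over K, and v : ℕ → K^N a sequence with B·v₀ = v₁ and B·v_m = v_{m+1} + v_{m−1} for all m ≥ 1. Let M(t) = (1+t²)·I − t·B, an N×N matrix over the polynomial ring K[t], fix an index j₀, and let M₀(t) be the matrix obtained from M(t) by replacing its j₀-th column by the constant vector v₀. Then det M(t) · Σ_{m≥0} v_m(j₀) t^m = det M₀(t) in the formal power series ring K⟦t⟧. -/

import Mathlib

open Polynomial PowerSeries

open Matrix in
private theorem key_lemma (K : Type*) [Field K] (N : ℕ)
    (B : Matrix (Fin N) (Fin N) K) (v : ℕ → Fin N → K)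
    (h0 : B.mulVec (v 0) = v 1)
    (h : ∀ m : ℕ, 1 ≤ m → B.mulVec (v m) = v (m + 1) + v (m - 1))
    (M : Matrix (Fin N) (Fin N) K[X])
    (hM : M = (1 + (Polynomial.X : K[X]) ^ 2) • (1 : Matrix (Fin N) (Fin N) K[X])
        - (Polynomial.X : K[X]) • B.map (Polynomial.C : K →+* K[X]).toFun) :
    (M.map (Polynomial.coeToPowerSeries.ringHom : K[X] →+* K⟦X⟧)) *ᵥ
      (fun i => PowerSeries.mk fun m => v m i) = fun i => PowerSeries.C (v 0 i) := by
  set φ : K[X] →+* K⟦X⟧ := Polynomial.coeToPowerSeries.ringHom with hφ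
  set F : Fin N → K⟦X⟧ := fun i => PowerSeries.mk fun m => v m i with hF
  funext i
  have hrow : ∀ j, (M.map φ) i j
      = (1 + PowerSeries.X ^ 2) * (if i = j then 1 else 0)
        - PowerSeries.X * PowerSeries.C (B i j) := by
    intro j
    simp only [hM, Matrix.map_apply, Matrix.sub_apply, Matrix.smul_apply, Matrix.one_apply,
      smul_eq_mul, _root_.map_sub, _root_.map_mul, _root_.map_add, _root_.map_one, map_pow]
    rw [hφ]
    simp only [Polynomial.coeToPowerSeries.ringHom_apply, apply_ite
      (Polynomial.coeToPowerSeries.ringHom : K[X] →+* K⟦X⟧)]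
    simp [Polynomial.coe_X, Polynomial.coe_C, apply_ite]
  have hG : (∑ j, PowerSeries.C (B i j) * F j)
      = PowerSeries.mk (fun m => B.mulVec (v m) i) := by
    ext m
    simp [hF, map_sum, PowerSeries.coeff_C_mul, Matrix.mulVec, dotProduct, coeff_mk]
  have hsum : ((M.map φ) *ᵥ F) i = (1 + PowerSeries.X ^ 2) * F i
      - PowerSeries.X * PowerSeries.mk (fun m => B.mulVec (v m) i) := by
    rw [← hG]
    simp only [Matrix.mulVec, dotProduct, hrow, sub_mul]
    rw [Finset.sum_sub_distrib]
    congr 1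
    · simp [mul_ite, ite_mul, mul_one, mul_zero, zero_mul, Finset.sum_ite_eq]
    · rw [Finset.mul_sum]
      exact Finset.sum_congr rfl fun j _ => by ring
  show ((M.map φ) *ᵥ F) i = PowerSeries.C (v 0 i)
  rw [hsum]
  ext m
  rw [show (1 + PowerSeries.X^2 : K⟦X⟧) * F i
      - PowerSeries.X * PowerSeries.mk (fun m => B.mulVec (v m) i)
      = F i + PowerSeries.X^2 * F i
        - PowerSeries.X^1 * PowerSeries.mk (fun m => B.mulVec (v m) i) by ring]
  simp only [_root_.map_sub, _root_.map_add, PowerSeries.coeff_X_pow_mul', coeff_mk, PowerSeries.coeff_C, hF]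
  rcases m with _ | _ | m
  · simp
  · simp [← congrFun h0 i]
  · have hb := congrFun (h (m + 1) (by omega)) i
    simp only [Pi.add_apply] at hb
    norm_num [hb]
    simp [show 2 + m - 2 = m by omega]


/-- Cramer's rule step in the McKay-correspondence proof: with `M(t) = (1+t²)I - tB`
over `K[t]`, `M₀(t)` obtained from `M(t)` by replacing column `j₀` by the constant
vector `v₀`, and `v : ℕ → K^N` satisfying `B·v₀ = v₁`, `B·v_m = v_{m+1} + v_{m-1}`
for `m ≥ 1`, one has `det M(t) · Σ_m v_m(j₀) t^m = det M₀(t)` in `K⟦t⟧`. -/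
theorem cramer_generating_series
    (K : Type*) [Field K] (N : ℕ) (hN : 1 ≤ N)
    (B : Matrix (Fin N) (Fin N) K) (v : ℕ → Fin N → K)
    (h0 : B.mulVec (v 0) = v 1)
    (h : ∀ m : ℕ, 1 ≤ m → B.mulVec (v m) = v (m + 1) + v (m - 1))
    (j₀ : Fin N)
    (M M₀ : Matrix (Fin N) (Fin N) K[X])
    (hM : M = (1 + (Polynomial.X : K[X]) ^ 2) • (1 : Matrix (Fin N) (Fin N) K[X])
        - (Polynomial.X : K[X]) • B.map (Polynomial.C : K →+* K[X]).toFun)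
    (hM₀ : M₀ = M.updateCol j₀ fun i => Polynomial.C (v 0 i)) :
    (M.det : PowerSeries K) * PowerSeries.mk (fun m => v m j₀)
      = (M₀.det : PowerSeries K) := by
  set φ : K[X] →+* K⟦X⟧ := Polynomial.coeToPowerSeries.ringHom with hφ
  set F : Fin N → K⟦X⟧ := fun i => PowerSeries.mk fun m => v m i with hF
  set A : Matrix (Fin N) (Fin N) K⟦X⟧ := M.map φ with hA
  have hkey : A.mulVec F = fun i => PowerSeries.C (v 0 i) :=
    key_lemma K N B v h0 h M hM
  have hdetM : (M.det : K⟦X⟧) = A.det := by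
    rw [hA, ← Polynomial.coeToPowerSeries.ringHom_apply, ← hφ, RingHom.map_det,
      RingHom.mapMatrix_apply]
  have hdetM0 : (M₀.det : K⟦X⟧)
      = (A.updateCol j₀ fun i => PowerSeries.C (v 0 i)).det := by
    rw [← Polynomial.coeToPowerSeries.ringHom_apply, ← hφ, RingHom.map_det,
      RingHom.mapMatrix_apply, hM₀, Matrix.map_updateCol]
    have hc : ((φ : K[X] → K⟦X⟧) ∘ fun i => Polynomial.C (v 0 i))
        = fun i => PowerSeries.C (v 0 i) := by
      funext i
      simp [hφ, Polynomial.coe_C]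
    rw [hc]
  rw [hdetM, hdetM0, ← hkey]
  have : (A.updateCol j₀ (A.mulVec F)).det = Matrix.cramer A (A.mulVec F) j₀ :=
    (Matrix.cramer_apply A (A.mulVec F) j₀).symm
  rw [this, Matrix.cramer_eq_adjugate_mulVec, Matrix.mulVec_mulVec, Matrix.adjugate_mul,
    Matrix.smul_mulVec, Matrix.one_mulVec]
  simp [smul_eq_mul, hF]
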